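/- Let m ≥ 1, let P be a positive definite real m×m matrix, let Θ be an invertible real m×m matrix, let K₀ > 0, and let y, w : ℝ → ℝ^m be functions. Define ȳ(t) = Θ·(y(t) - w(t)). Suppose F : ℝ → ℝ is differentiable with continuous derivative, F is bounded from below on [0,∞), its derivative satisfies F'(t) = -2K₀ · (ȳ(t)ᵀ P ȳ(t)) for all t ≥ 0, and the function t ↦ ȳ(t)ᵀ P ȳ(t) has bounded variation on [0,∞). Then y(t) - w(t) → 0 as t → ∞. -/

import Mathlib

open Matrix

lemma aux_tendsto_of_monoOn {f : ℝ → ℝ} (hm : MonotoneOn f (Set.Ici 0))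
    (hb : BddAbove (f '' Set.Ici 0)) : ∃ L, Filter.Tendsto f Filter.atTop (nhds L) := by
  set f' : ℝ → ℝ := fun t => f (max t 0) with hf'
  have hmono : Monotone f' := fun a b hab =>
    hm (le_max_right a 0) (le_max_right b 0) (max_le_max hab le_rfl)
  have hbdd : BddAbove (Set.range f') := by
    refine hb.mono ?_
    rintro x ⟨t, rfl⟩
    exact ⟨max t 0, le_max_right t 0, rfl⟩
  refine ⟨⨆ t, f' t, Filter.Tendsto.congr' ?_ (tendsto_atTop_ciSup hmono hbdd)⟩
  filter_upwards [Filter.eventually_ge_atTop (0:ℝ)] with t ht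
  simp [hf', max_eq_left ht]

lemma aux_bv_tendsto {g : ℝ → ℝ} (hg0 : ∀ t, 0 ≤ g t)
    (hbv : BoundedVariationOn g (Set.Ici 0)) :
    ∃ L, Filter.Tendsto g Filter.atTop (nhds L) := by
  have loc := hbv.locallyBoundedVariationOn
  have h0 : (0:ℝ) ∈ Set.Ici (0:ℝ) := Set.mem_Ici.mpr le_rfl
  set p : ℝ → ℝ := variationOnFromTo g (Set.Ici 0) 0 with hp_def
  have hp : MonotoneOn p (Set.Ici 0) := variationOnFromTo.monotoneOn loc h0
  have hq : MonotoneOn (p - g) (Set.Ici 0) := variationOnFromTo.sub_self_monotoneOn loc h0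
  have hpbd : ∀ t ∈ Set.Ici (0:ℝ), p t ≤ (eVariationOn g (Set.Ici 0)).toReal := by
    intro t ht
    rw [hp_def, variationOnFromTo.eq_of_le g _ ht]
    exact ENNReal.toReal_mono hbv (eVariationOn.mono g Set.inter_subset_left)
  have hbp : BddAbove (p '' Set.Ici 0) := by
    refine ⟨(eVariationOn g (Set.Ici 0)).toReal, ?_⟩
    rintro x ⟨t, ht, rfl⟩; exact hpbd t ht
  have hbq : BddAbove ((p - g) '' Set.Ici 0) := by
    refine ⟨(eVariationOn g (Set.Ici 0)).toReal, ?_⟩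
    rintro x ⟨t, ht, rfl⟩
    simp only [Pi.sub_apply]
    have := hg0 t
    linarith [hpbd t ht]
  obtain ⟨Lp, hLp⟩ := aux_tendsto_of_monoOn hp hbp
  obtain ⟨Lq, hLq⟩ := aux_tendsto_of_monoOn hq hbq
  refine ⟨Lp - Lq, ?_⟩
  have : g = fun t => p t - (p - g) t := by funext t; simp
  rw [this]
  exact hLp.sub hLq

/-- Analytic content of Corollary 1: under the control law the controllers
asymptotically track the optimal placement, i.e. `y(t) - w(t) → 0`. -/
theorem stmt3 (m : ℕ) (hm : 1 ≤ m)
    (P Θ : Matrix (Fin m) (Fin m) ℝ) (hP : P.PosDef) (hΘ : IsUnit Θ.det)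
    (K₀ : ℝ) (hK : 0 < K₀)
    (y w : ℝ → Fin m → ℝ)
    (ybar : ℝ → Fin m → ℝ) (hybar : ∀ t, ybar t = Θ.mulVec (y t - w t))
    (F : ℝ → ℝ) (hF : Differentiable ℝ F) (hFc : Continuous (deriv F))
    (hbd : BddBelow (F '' Set.Ici 0))
    (hderiv : ∀ t ≥ (0 : ℝ), deriv F t = -2 * K₀ * (ybar t ⬝ᵥ P.mulVec (ybar t)))
    (hbv : BoundedVariationOn (fun t => ybar t ⬝ᵥ P.mulVec (ybar t)) (Set.Ici 0)) :
    Filter.Tendsto (fun t => y t - w t) Filter.atTop (nhds 0) := by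
  set g : ℝ → ℝ := fun t => ybar t ⬝ᵥ P.mulVec (ybar t) with hg_def
  open scoped MatrixOrder in
  set S := CFC.sqrt P with hS_def
  set v : ℝ → Fin m → ℝ := fun t => S.mulVec (ybar t) with hv_def
  -- the quadratic form equals the squared norm of `v`
  have hSt : Sᵀ = S := by
    open scoped MatrixOrder in
    have := (CFC.sqrt_nonneg P).posSemidef.1
    rwa [Matrix.IsHermitian, Matrix.conjTranspose_eq_transpose_of_trivial] at this
  have hgv : ∀ t, g t = v t ⬝ᵥ v t := by
    intro t
    calc g t = ybar t ⬝ᵥ (S * S).mulVec (ybar t) := by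
              open scoped MatrixOrder in rw [hg_def, CFC.sqrt_mul_sqrt_self P hP.posSemidef.nonneg]
      _ = ybar t ⬝ᵥ S.mulVec (S.mulVec (ybar t)) := by rw [Matrix.mulVec_mulVec]
      _ = (S.vecMul (ybar t)) ⬝ᵥ (S.mulVec (ybar t)) := by rw [Matrix.dotProduct_mulVec]
      _ = v t ⬝ᵥ v t := by rw [← Matrix.mulVec_transpose, hSt]
  have hgsum : ∀ t, g t = ∑ i, (v t i) ^ 2 := by
    intro t
    rw [hgv t]
    simp [dotProduct, sq]
  have hg0 : ∀ t, 0 ≤ g t := fun t => by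
    rw [hgsum t]; exact Finset.sum_nonneg fun i _ => sq_nonneg _
  -- g converges to some L ≥ 0
  obtain ⟨L, hL⟩ := aux_bv_tendsto hg0 hbv
  have hL0 : 0 ≤ L := ge_of_tendsto' hL hg0
  -- L must be 0
  have hLzero : L = 0 := by
    by_contra hne
    have hLpos : 0 < L := lt_of_le_of_ne hL0 (Ne.symm hne)
    have hev : ∀ᶠ t in Filter.atTop, L / 2 < g t :=
      hL.eventually (eventually_gt_nhds (by linarith))
    obtain ⟨T₀, hT₀⟩ := Filter.eventually_atTop.mp hev
    set T : ℝ := max T₀ 0 with hT_def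
    set c : ℝ := K₀ * L with hc_def
    have hc : 0 < c := mul_pos hK hLpos
    set G : ℝ → ℝ := fun t => F t + c * t with hG_def
    have hGd : Differentiable ℝ G := hF.add (differentiable_id.const_mul c)
    have hanti : AntitoneOn G (Set.Ici T) := by
      apply antitoneOn_of_deriv_nonpos (convex_Ici T) hGd.continuous.continuousOn
        (hGd.differentiableOn)
      intro x hx
      rw [interior_Ici] at hx
      have hxT : T < x := hx
      have hx0 : (0:ℝ) ≤ x := le_trans (le_max_right T₀ 0) hxT.le
      have hxg : L / 2 < g x := hT₀ x (le_trans (le_max_left T₀ 0) hxT.le)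
      have hdG : deriv G x = deriv F x + c := by
        have h1 : HasDerivAt (fun t : ℝ => c * t) c x := by
          simpa using (hasDerivAt_id x).const_mul c
        exact (((hF x).hasDerivAt).add h1).deriv
      rw [hdG, hderiv x hx0]
      nlinarith
    obtain ⟨b, hb⟩ := hbd
    have hbF : ∀ t : ℝ, 0 ≤ t → b ≤ F t := fun t ht => hb ⟨t, ht, rfl⟩
    set t : ℝ := max T ((F T + c * T - b) / c + 1) with ht_def
    have htT : T ≤ t := le_max_left _ _
    have ht0 : (0:ℝ) ≤ t := le_trans (le_max_right T₀ 0) htT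
    have hGle : G t ≤ G T := hanti (Set.mem_Ici.mpr le_rfl) (Set.mem_Ici.mpr htT) htT
    have h1 : F t + c * t ≤ F T + c * T := hGle
    have h2 : b ≤ F t := hbF t ht0
    have h3 : (F T + c * T - b) / c + 1 ≤ t := le_max_right _ _
    have h4 : F T + c * T - b + c ≤ c * t := by
      have := mul_le_mul_of_nonneg_left h3 hc.le
      rw [mul_add, mul_one, mul_div_cancel₀ _ hc.ne'] at this
      linarith
    linarith
  rw [hLzero] at hL
  -- hence v → 0
  have hsq : Filter.Tendsto (fun t => Real.sqrt (g t)) Filter.atTop (nhds 0) := by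
    have := (Real.continuous_sqrt.tendsto 0).comp hL
    simpa [Function.comp_def] using this
  have hv0 : Filter.Tendsto v Filter.atTop (nhds 0) := by
    rw [tendsto_pi_nhds]
    intro i
    apply squeeze_zero_norm _ hsq
    intro t
    have hle : (v t i) ^ 2 ≤ g t := by
      rw [hgsum t]
      exact Finset.single_le_sum (fun j _ => sq_nonneg (v t j)) (Finset.mem_univ i)
    calc ‖v t i‖ = Real.sqrt ((v t i) ^ 2) := by
          rw [Real.sqrt_sq_eq_abs]; rfl
      _ ≤ Real.sqrt (g t) := Real.sqrt_le_sqrt hle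
  -- S is invertible
  have hSdet : IsUnit S.det := by
    have h : S.det * S.det = P.det := by
      open scoped MatrixOrder in rw [← Matrix.det_mul, CFC.sqrt_mul_sqrt_self P hP.posSemidef.nonneg]
    have hd : P.det ≠ 0 := ne_of_gt hP.det_pos
    refine isUnit_iff_ne_zero.mpr fun h0 => hd ?_
    rw [← h, h0, mul_zero]
  -- ybar → 0
  have hmvS : Continuous (fun u : Fin m → ℝ => S⁻¹.mulVec u) :=
    LinearMap.continuous_of_finiteDimensional (Matrix.mulVecLin S⁻¹)
  have hybar0 : Filter.Tendsto ybar Filter.atTop (nhds 0) := by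
    have hrw : ybar = fun t => S⁻¹.mulVec (v t) := by
      funext t
      rw [hv_def]
      rw [Matrix.mulVec_mulVec, Matrix.nonsing_inv_mul S hSdet, Matrix.one_mulVec]
    rw [hrw]
    have := (hmvS.tendsto 0).comp hv0
    simpa [Function.comp_def] using this
  -- y - w → 0
  have hmvΘ : Continuous (fun u : Fin m → ℝ => Θ⁻¹.mulVec u) :=
    LinearMap.continuous_of_finiteDimensional (Matrix.mulVecLin Θ⁻¹)
  have hrw2 : (fun t => y t - w t) = fun t => Θ⁻¹.mulVec (ybar t) := by
    funext t
    rw [hybar t, Matrix.mulVec_mulVec, Matrix.nonsing_inv_mul Θ hΘ, Matrix.one_mulVec]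
  rw [hrw2]
  have := (hmvΘ.tendsto 0).comp hybar0
  simpa [Function.comp_def] using this
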